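/- The rotated second-order cone is self-dual: for every natural number n ≥ 1, the inner dual cone of Q_r^{n+2} in ℝ × ℝ × ℝⁿ (with respect to the standard Euclidean inner product ⟨(a,b,u),(c,e,v)⟩ = a·c + b·e + ⟨u,v⟩) is equal to Q_r^{n+2} itself; that is, (c,e,v) satisfies a·c + b·e + ⟨u,v⟩ ≥ 0 for all (a,b,u) ∈ Q_r^{n+2} if and only if c ≥ 0, e ≥ 0, and ‖v‖² ≤ 2·c·e. -/

import Mathlib

/-- The rotated second-order cone `Q_r^{n+2} ⊆ ℝ × ℝ × ℝⁿ`: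
`(a, b, u)` with `a ≥ 0`, `b ≥ 0`, `‖u‖² ≤ 2·a·b`. -/
def RSOC (n : ℕ) : Set (ℝ × ℝ × EuclideanSpace ℝ (Fin n)) :=
  {p | 0 ≤ p.1 ∧ 0 ≤ p.2.1 ∧ ‖p.2.2‖ ^ 2 ≤ 2 * p.1 * p.2.1}

/-- The rotated second-order cone is self-dual: the inner dual cone of `Q_r^{n+2}`
with respect to the pairing `⟨(a,b,u),(c,e,v)⟩ = a·c + b·e + ⟨u,v⟩` equals `Q_r^{n+2}`. -/
theorem rsoc_self_dual (n : ℕ) (hn : 1 ≤ n) :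
    {y : ℝ × ℝ × EuclideanSpace ℝ (Fin n) |
        ∀ x ∈ RSOC n,
          0 ≤ x.1 * y.1 + x.2.1 * y.2.1 + (inner ℝ x.2.2 y.2.2 : ℝ)} = RSOC n := by
  ext ⟨c, e, v⟩
  simp only [Set.mem_setOf_eq, RSOC]
  constructor
  · intro h
    have hc : 0 ≤ c := by
      have := h (1, 0, 0) ⟨zero_le_one, le_refl 0, by simp⟩
      simpa using this
    have he : 0 ≤ e := by
      have := h (0, 1, 0) ⟨le_refl 0, zero_le_one, by simp⟩
      simpa using this
    refine ⟨hc, he, ?_⟩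
    by_contra hlt
    push_neg at hlt
    set s : ℝ := c + e with hs
    have hs0 : 0 ≤ s := by positivity
    have hD : 0 < s ^ 2 + 2 * (‖v‖ ^ 2 - 2 * c * e) := by nlinarith [sq_nonneg s]
    set D : ℝ := s ^ 2 + 2 * (‖v‖ ^ 2 - 2 * c * e) with hDdef
    have hsqD : Real.sqrt D ^ 2 = D := Real.sq_sqrt hD.le
    have hsltD : s < Real.sqrt D := by
      nlinarith [Real.sqrt_nonneg D, hsqD, sq_nonneg (Real.sqrt D - s)]
    set ε : ℝ := (Real.sqrt D - s) / 2 with hε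
    have hε0 : 0 < ε := by simp [hε]; linarith
    have hkey : 2 * ε ^ 2 + 2 * s * ε = ‖v‖ ^ 2 - 2 * c * e := by
      have : (Real.sqrt D) ^ 2 = D := hsqD
      field_simp [hε]
      nlinarith [this]
    have hmem : (e + ε, c + ε, -v) ∈ RSOC n := by
      refine ⟨by dsimp only; linarith, by dsimp only; linarith, ?_⟩
      dsimp only
      simp only [norm_neg]
      nlinarith
    have := h (e + ε, c + ε, -v) hmem
    simp only at this
    have hinner : (inner ℝ (-v) v : ℝ) = -(‖v‖ ^ 2) := by
      rw [inner_neg_left, real_inner_self_eq_norm_sq]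
    rw [hinner] at this
    nlinarith
  · rintro ⟨hc, he, hv⟩ ⟨a, b, u⟩ ⟨ha, hb, hu⟩
    dsimp only at ha hb hu ⊢
    have h1 : -(‖u‖ * ‖v‖) ≤ (inner ℝ u v : ℝ) := by
      have := abs_real_inner_le_norm u v
      cases abs_le.mp this with
      | intro l r => linarith
    have hac : 0 ≤ a * c + b * e := by positivity
    have hsq : (‖u‖ * ‖v‖) ^ 2 ≤ (a * c + b * e) ^ 2 := by
      nlinarith [sq_nonneg (a * c - b * e),
        mul_le_mul hu hv (sq_nonneg ‖v‖) (by positivity : (0:ℝ) ≤ 2 * a * b)]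
    have h2 : ‖u‖ * ‖v‖ ≤ a * c + b * e := by
      nlinarith [mul_nonneg (norm_nonneg u) (norm_nonneg v), hsq, hac]
    linarith
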